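/- For every λ ≥ 0 and every natural number j ≥ 1: λ·(g(j+1,λ,{j}) − g(j,λ,{j})) = e^{−λ}·( Σ_{k=j+1}^{∞} λ^k/k! + (1/j)·Σ_{k=0}^{j−1} λ^{k+1}/k! ), and this quantity is at most 1 − e^{−λ}. -/
import Mathlib


open scoped BigOperators

/-- Poisson pmf: Po(k;lam) = lam^k * e^(-lam) / k!  (with the convention 0^0 = 1). -/
noncomputable def Po (k : ℕ) (lam : ℝ) : ℝ := lam ^ k * Real.exp (-lam) / (Nat.factorial k)

/-- Poisson measure of a set A of naturals: Po(A;lam) = sum over k in A of Po(k;lam). -/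
noncomputable def PoSet (A : Set ℕ) (lam : ℝ) : ℝ := ∑' k : A, Po k lam

/-- The scalar Stein-Chen solution g(j,lam,A), defined recursively by g(0,lam,A) = 0 and
g(j,lam,A) = lam⁻¹ * ((j-1)*g(j-1,lam,A) + 1_A(j-1) - Po(A;lam))
             + (1/j) * 1_{lam=0} * (1_A(0) - 1_A(j)) for j ≥ 1,
with the convention 0⁻¹ = 0. -/
noncomputable def steinChen : ℕ → ℝ → Set ℕ → ℝ
  | 0, _, _ => 0
  | (j + 1), lam, A =>
      lam⁻¹ * ((j : ℝ) * steinChen j lam A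
          + A.indicator (fun _ => (1 : ℝ)) j - PoSet A lam)
        + (1 / ((j : ℝ) + 1)) * (if lam = 0 then (1 : ℝ) else 0)
          * (A.indicator (fun _ => (1 : ℝ)) 0 - A.indicator (fun _ => (1 : ℝ)) (j + 1))

lemma steinChen_closed (lam : ℝ) (hl : lam ≠ 0) (A : Set ℕ) :
    ∀ j : ℕ, (j : ℝ) * lam ^ j / (j.factorial : ℝ) * steinChen j lam A =
      ∑ k ∈ Finset.range j,
        lam ^ k * (A.indicator (fun _ => (1:ℝ)) k - PoSet A lam) / (k.factorial : ℝ)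
  | 0 => by simp [steinChen]
  | (j+1) => by
    have ih := steinChen_closed lam hl A j
    rw [Finset.sum_range_succ, ← ih, steinChen, if_neg hl]
    have hfj : (j.factorial : ℝ) ≠ 0 := Nat.cast_ne_zero.mpr j.factorial_ne_zero
    have hfac : (((j+1).factorial : ℕ) : ℝ) = ((j:ℝ)+1) * (j.factorial : ℝ) := by
      rw [Nat.factorial_succ]; push_cast; ring
    set g := steinChen j lam A
    rw [hfac]
    push_cast
    have hj1 : ((j:ℝ)+1) ≠ 0 := by positivity
    field_simp
    ring

lemma PoSet_singleton (j : ℕ) (lam : ℝ) :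
    PoSet {j} lam = lam ^ j * Real.exp (-lam) / (j.factorial : ℝ) := by
  rw [PoSet, tsum_eq_single (⟨j, rfl⟩ : ({j} : Set ℕ))]
  · rfl
  · rintro ⟨b, hb⟩ hne
    simp only [Set.mem_singleton_iff] at hb
    subst hb; simp at hne

lemma exp_tail (lam : ℝ) (n : ℕ) :
    Real.exp lam = (∑ k ∈ Finset.range n, lam ^ k / (k.factorial : ℝ))
      + ∑' t : ℕ, lam ^ (n + t) / ((n + t).factorial : ℝ) := by
  rw [Real.exp_eq_exp_ℝ, NormedSpace.exp_eq_tsum_div]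
  dsimp only
  rw [← Summable.sum_add_tsum_nat_add n (Real.summable_pow_div_factorial lam)]
  congr 1
  exact tsum_congr fun t => by rw [add_comm t n]


/-- For lam ≥ 0 and j ≥ 1:
lam * (g(j+1,lam,{j}) - g(j,lam,{j}))
  = e^(-lam) * ( sum_{k=j+1}^infty lam^k/k! + (1/j) * sum_{k=0}^{j-1} lam^(k+1)/k! ),
and this quantity is at most 1 - e^(-lam).  (The infinite series is indexed by
k = j+1+t, t ∈ ℕ.) -/
theorem steinChen_delta_diag (lam : ℝ) (hlam : 0 ≤ lam) (j : ℕ) (hj : 1 ≤ j) :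
    lam * (steinChen (j + 1) lam {j} - steinChen j lam {j}) =
      Real.exp (-lam) *
        ((∑' t : ℕ, lam ^ (j + 1 + t) / ((j + 1 + t).factorial : ℝ))
          + (1 / (j : ℝ)) * ∑ k ∈ Finset.range j, lam ^ (k + 1) / (k.factorial : ℝ)) ∧
    lam * (steinChen (j + 1) lam {j} - steinChen j lam {j}) ≤ 1 - Real.exp (-lam) := by
  rcases eq_or_lt_of_le hlam with h0 | hpos
  · -- lam = 0
    subst h0
    have hz : ∀ t : ℕ, (0:ℝ) ^ (j + 1 + t) / ((j + 1 + t).factorial : ℝ) = 0 := by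
      intro t; rw [zero_pow (by omega)]; simp
    constructor
    · rw [tsum_congr hz, tsum_zero]
      simp [zero_pow]
    · simp
  · -- lam > 0
    have hl : lam ≠ 0 := ne_of_gt hpos
    have hjR : ((j:ℝ)) ≠ 0 := Nat.cast_ne_zero.mpr (by omega)
    have hfj : (j.factorial : ℝ) ≠ 0 := Nat.cast_ne_zero.mpr j.factorial_ne_zero
    have hfac : (((j+1).factorial : ℕ) : ℝ) = ((j:ℝ)+1) * (j.factorial : ℝ) := by
      rw [Nat.factorial_succ]; push_cast; ring
    set P := PoSet {j} lam with hPdef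
    set S := ∑ k ∈ Finset.range j, lam ^ k / (k.factorial : ℝ) with hSdef
    -- indicator values
    have hind : ∀ k : ℕ, k ≠ j → ({j} : Set ℕ).indicator (fun _ => (1:ℝ)) k = 0 := by
      intro k hk; simp [Set.indicator_apply, hk]
    have hindj : ({j} : Set ℕ).indicator (fun _ => (1:ℝ)) j = 1 := by simp
    -- sum formulas
    have hsum_j : ∑ k ∈ Finset.range j,
        lam ^ k * (({j} : Set ℕ).indicator (fun _ => (1:ℝ)) k - P) / (k.factorial : ℝ)
        = -(P * S) := by
      rw [hSdef, Finset.mul_sum, ← Finset.sum_neg_distrib]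
      refine Finset.sum_congr rfl fun k hk => ?_
      rw [hind k (by simp at hk; omega)]
      ring
    have key_j := steinChen_closed lam hl {j} j
    have key_j1 := steinChen_closed lam hl {j} (j+1)
    rw [hsum_j] at key_j
    rw [Finset.sum_range_succ, hsum_j, hindj] at key_j1
    -- solve for steinChen values
    have hc : ((j:ℝ)) * lam ^ j / (j.factorial : ℝ) ≠ 0 := by positivity
    have hc1 : (((j+1:ℕ)):ℝ) * lam ^ (j+1) / (((j+1).factorial : ℕ) : ℝ) ≠ 0 := by
      rw [hfac]; push_cast; positivity
    have hg : steinChen j lam {j}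
        = -(P * S) / ((j:ℝ) * lam ^ j / (j.factorial : ℝ)) := by
      rw [eq_div_iff hc, mul_comm, key_j]
    have hg1 : steinChen (j+1) lam {j}
        = (-(P * S) + lam ^ j * (1 - P) / (j.factorial : ℝ))
          / ((((j+1:ℕ)):ℝ) * lam ^ (j+1) / (((j+1).factorial : ℕ) : ℝ)) := by
      rw [eq_div_iff hc1, mul_comm, key_j1]
    -- tail identity
    have htail := exp_tail lam (j+1)
    set T := ∑' t : ℕ, lam ^ (j + 1 + t) / ((j + 1 + t).factorial : ℝ) with hTdef
    have hT : T = Real.exp lam - (∑ k ∈ Finset.range (j+1), lam ^ k / (k.factorial : ℝ)) := by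
      rw [htail]; ring
    have hSsucc : ∑ k ∈ Finset.range (j+1), lam ^ k / (k.factorial : ℝ)
        = S + lam ^ j / (j.factorial : ℝ) := by
      rw [Finset.sum_range_succ, hSdef]
    have hlamS : ∑ k ∈ Finset.range j, lam ^ (k + 1) / (k.factorial : ℝ) = lam * S := by
      rw [hSdef, Finset.mul_sum]
      exact Finset.sum_congr rfl fun k _ => by rw [pow_succ]; ring
    have hexpne : Real.exp lam ≠ 0 := Real.exp_ne_zero lam
    have hexpneg : Real.exp (-lam) = (Real.exp lam)⁻¹ := Real.exp_neg lam
    have hPval : P = lam ^ j * Real.exp (-lam) / (j.factorial : ℝ) := PoSet_singleton j lam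
    -- the main equality
    have heq : lam * (steinChen (j + 1) lam {j} - steinChen j lam {j}) =
        Real.exp (-lam) * (T + (1 / (j : ℝ)) * (lam * S)) := by
      rw [hg, hg1, hT, hSsucc, hPval, hfac, hexpneg]
      push_cast
      have hj1 : ((j:ℝ)+1) ≠ 0 := by positivity
      field_simp
      ring
    constructor
    · rw [hlamS]; exact heq
    · rw [heq]
      have hbound : T + (1 / (j : ℝ)) * (lam * S) ≤ Real.exp lam - 1 := by
        have h1 : Real.exp lam - 1 = T + ∑ k ∈ Finset.range j, lam ^ (k+1) / ((k+1).factorial : ℝ) := by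
          rw [htail]
          rw [Finset.sum_range_succ' (fun k => lam ^ k / (k.factorial : ℝ)) j]
          simp [hTdef]
          ring
        rw [h1]
        have h2 : (1 / (j : ℝ)) * (lam * S)
            ≤ ∑ k ∈ Finset.range j, lam ^ (k+1) / ((k+1).factorial : ℝ) := by
          rw [← hlamS, Finset.mul_sum]
          refine Finset.sum_le_sum fun k hk => ?_
          have hkj : (k:ℝ) + 1 ≤ (j:ℝ) := by
            have : k + 1 ≤ j := by simp at hk; omega
            exact_mod_cast this
          have hfk : (((k+1).factorial : ℕ) : ℝ) = ((k:ℝ)+1) * (k.factorial : ℝ) := by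
            rw [Nat.factorial_succ]; push_cast; ring
          rw [hfk, one_div, ← div_eq_inv_mul, div_div]
          apply div_le_div_of_nonneg_left (by positivity) (by positivity)
          have hfk0 : (0:ℝ) ≤ (k.factorial : ℝ) := by positivity
          nlinarith [mul_le_mul_of_nonneg_right hkj hfk0]
        linarith
      have hfinal : Real.exp (-lam) * (Real.exp lam - 1) = 1 - Real.exp (-lam) := by
        rw [mul_sub, ← Real.exp_add]; simp
      calc Real.exp (-lam) * (T + (1 / (j : ℝ)) * (lam * S))
          ≤ Real.exp (-lam) * (Real.exp lam - 1) :=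
            mul_le_mul_of_nonneg_left hbound (le_of_lt (Real.exp_pos _))
        _ = 1 - Real.exp (-lam) := hfinal
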